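/- For the classical normalized graph Laplacian of a connected finite graph, and any nonempty proper subset A of vertices with complement B, the second smallest eigenvalue satisfies λ₂(X) ≤ |∂A| · (1/vol(A) + 1/vol(B)), where ∂A is the set of directed edges from A to B and vol(S) = Σ_{v∈S} d_v. -/

import Mathlib

open Finset

/-- The classical normalized graph Laplacian `Δ = I - T^{-1/2} A T^{-1/2}`. -/
noncomputable def normLap {V : Type} [Fintype V] [DecidableEq V]
    (G : SimpleGraph V) [DecidableRel G.Adj] : Matrix V V ℝ :=
  Matrix.of fun v w => (if v = w then (1 : ℝ) else 0) -
    (G.adjMatrix ℝ) v w / Real.sqrt ((G.degree v : ℝ) * (G.degree w : ℝ))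

/-- The volume of a set of vertices: the sum of the degrees. -/
def vol {V : Type} [Fintype V] [DecidableEq V]
    (G : SimpleGraph V) [DecidableRel G.Adj] (A : Finset V) : ℝ :=
  ∑ v ∈ A, (G.degree v : ℝ)

/-- The number of directed edges from `A` to its complement. -/
def boundaryCard {V : Type} [Fintype V] [DecidableEq V]
    (G : SimpleGraph V) [DecidableRel G.Adj] (A : Finset V) : ℕ :=
  (Finset.univ.filter (fun p : V × V => p.1 ∈ A ∧ p.2 ∉ A ∧ G.Adj p.1 p.2)).card

variable {V : Type} [Fintype V] [DecidableEq V] (G : SimpleGraph V) [DecidableRel G.Adj]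

lemma normLap_mulVec (f : V → ℝ) (v : V) :
    (normLap G).mulVec f v
      = f v - ∑ w, (G.adjMatrix ℝ) v w *
          (f w / (Real.sqrt (G.degree v) * Real.sqrt (G.degree w))) := by
  simp only [normLap, Matrix.mulVec, dotProduct, Matrix.of_apply, sub_mul, ite_mul,
    one_mul, zero_mul, Finset.sum_sub_distrib, Finset.sum_ite_eq, Finset.mem_univ, if_true]
  congr 1
  refine Finset.sum_congr rfl fun w _ => ?_
  rw [Real.sqrt_mul (by positivity) ]
  ring

lemma adj_row_sum (v : V) : ∑ w, (G.adjMatrix ℝ) v w = (G.degree v : ℝ) := by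
  simp [SimpleGraph.adjMatrix, SimpleGraph.degree, SimpleGraph.neighborFinset_eq_filter]

lemma normLap_symm (v w : V) : normLap G v w = normLap G w v := by
  by_cases h : v = w
  · subst h; rfl
  · simp only [normLap, Matrix.of_apply, if_neg h, if_neg (Ne.symm h),
      SimpleGraph.adjMatrix_apply]
    rw [mul_comm ((G.degree v : ℝ))]
    congr 1
    simp [G.adj_comm]

lemma normLap_isHermitian : (normLap G).IsHermitian := by
  ext v w
  simp [Matrix.conjTranspose_apply, normLap_symm G w v]

lemma quadForm (hdeg : ∀ v, 0 < G.degree v) (f : V → ℝ) :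
    ∑ v, f v * (normLap G).mulVec f v
      = (1/2) * ∑ v, ∑ w, (G.adjMatrix ℝ) v w *
          (f v / Real.sqrt (G.degree v) - f w / Real.sqrt (G.degree w))^2 := by
  have hs : ∀ v, (0:ℝ) < Real.sqrt (G.degree v) := fun v =>
    Real.sqrt_pos.2 (by exact_mod_cast hdeg v)
  set s : V → ℝ := fun v => Real.sqrt (G.degree v) with hsdef
  set x : V → ℝ := fun v => f v / s v with hx
  have hd : ∀ v, s v * s v = (G.degree v : ℝ) := fun v =>
    Real.mul_self_sqrt (by positivity)
  have hfx : ∀ v, f v = s v * x v := fun v => by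
    rw [hx]; rw [mul_comm, div_mul_eq_mul_div, mul_div_assoc, div_self (hs v).ne', mul_one]
  -- LHS
  have hL : ∑ v, f v * (normLap G).mulVec f v
      = ∑ v, (G.degree v : ℝ) * (x v)^2 - ∑ v, ∑ w, (G.adjMatrix ℝ) v w * (x v * x w) := by
    rw [← Finset.sum_sub_distrib]
    refine Finset.sum_congr rfl fun v _ => ?_
    rw [normLap_mulVec, mul_sub, Finset.mul_sum]
    congr 1
    · rw [hfx v, ← hd v]; ring
    · refine Finset.sum_congr rfl fun w _ => ?_
      simp only [hx]
      rw [div_mul_div_comm]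
      ring
  -- RHS
  have hR : ∑ v, ∑ w, (G.adjMatrix ℝ) v w * (x v - x w)^2
      = 2 * (∑ v, (G.degree v : ℝ) * (x v)^2 - ∑ v, ∑ w, (G.adjMatrix ℝ) v w * (x v * x w)) := by
    have expand : ∀ v w, (G.adjMatrix ℝ) v w * (x v - x w)^2
        = (G.adjMatrix ℝ) v w * (x v)^2 + (G.adjMatrix ℝ) v w * (x w)^2
          - 2 * ((G.adjMatrix ℝ) v w * (x v * x w)) := fun v w => by ring
    simp only [expand, Finset.sum_sub_distrib, Finset.sum_add_distrib, ← Finset.mul_sum]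
    have h1 : ∑ v, ∑ w, (G.adjMatrix ℝ) v w * (x v)^2 = ∑ v, (G.degree v : ℝ) * (x v)^2 := by
      refine Finset.sum_congr rfl fun v _ => ?_
      rw [← Finset.sum_mul, adj_row_sum]
    have h2 : ∑ v, ∑ w, (G.adjMatrix ℝ) v w * (x w)^2 = ∑ v, (G.degree v : ℝ) * (x v)^2 := by
      rw [Finset.sum_comm]
      refine Finset.sum_congr rfl fun w _ => ?_
      have : ∀ v, (G.adjMatrix ℝ) v w = (G.adjMatrix ℝ) w v := fun v => by
        simp [G.adj_comm]
      simp only [this]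
      rw [← Finset.sum_mul, adj_row_sum]
    rw [h1, h2]
    ring
  rw [hL, hR]; ring

lemma normLap_sqrtDeg (hdeg : ∀ v, 0 < G.degree v) :
    (normLap G).mulVec (fun v => Real.sqrt (G.degree v)) = 0 := by
  have hs : ∀ v, (0:ℝ) < Real.sqrt (G.degree v) := fun v =>
    Real.sqrt_pos.2 (by exact_mod_cast hdeg v)
  funext v
  rw [Pi.zero_apply, normLap_mulVec, sub_eq_zero]
  have : ∀ w : V, (G.adjMatrix ℝ) v w *
      (Real.sqrt (G.degree w) / (Real.sqrt (G.degree v) * Real.sqrt (G.degree w)))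
      = (G.adjMatrix ℝ) v w * (1 / Real.sqrt (G.degree v)) := by
    intro w
    congr 1
    rw [mul_comm, div_mul_eq_div_div, div_self (hs w).ne']
  rw [Finset.sum_congr rfl (fun w _ => this w), ← Finset.sum_mul, adj_row_sum]
  rw [mul_one_div, Real.div_sqrt]

lemma sum_mulVec_symm (f g : V → ℝ) :
    ∑ v, f v * (normLap G).mulVec g v = ∑ v, (normLap G).mulVec f v * g v := by
  simp only [Matrix.mulVec, dotProduct, Finset.mul_sum, Finset.sum_mul]
  rw [Finset.sum_comm]
  refine Finset.sum_congr rfl fun v _ => Finset.sum_congr rfl fun w _ => ?_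
  rw [normLap_symm G w v]
  ring

lemma eigen_zero_eq (hconn : G.Connected) (hdeg : ∀ v, 0 < G.degree v) (f : V → ℝ)
    (hf : (normLap G).mulVec f = 0) :
    ∃ c : ℝ, f = fun v => c * Real.sqrt (G.degree v) := by
  have hs : ∀ v, (0:ℝ) < Real.sqrt (G.degree v) := fun v =>
    Real.sqrt_pos.2 (by exact_mod_cast hdeg v)
  set x : V → ℝ := fun v => f v / Real.sqrt (G.degree v) with hx
  have hq : (1/2) * ∑ v, ∑ w, (G.adjMatrix ℝ) v w * (x v - x w)^2 = 0 := by
    rw [← quadForm G hdeg f, hf]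
    simp
  have hzero : ∀ v ∈ Finset.univ, ∀ w ∈ Finset.univ,
      (G.adjMatrix ℝ) v w * (x v - x w)^2 = 0 := by
    have h0 : ∑ v, ∑ w, (G.adjMatrix ℝ) v w * (x v - x w)^2 = 0 := by linarith
    have hnn : ∀ v w, 0 ≤ (G.adjMatrix ℝ) v w * (x v - x w)^2 := fun v w => by
      apply mul_nonneg _ (sq_nonneg _)
      simp only [SimpleGraph.adjMatrix_apply]
      positivity
    intro v _ w _
    have := (Finset.sum_eq_zero_iff_of_nonneg (fun v _ =>
      Finset.sum_nonneg (fun w _ => hnn v w))).1 h0 v (Finset.mem_univ v)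
    exact (Finset.sum_eq_zero_iff_of_nonneg (fun w _ => hnn v w)).1 this w (Finset.mem_univ w)
  have hadj : ∀ v w, G.Adj v w → x v = x w := by
    intro v w h
    have := hzero v (Finset.mem_univ v) w (Finset.mem_univ w)
    rw [SimpleGraph.adjMatrix_apply, if_pos h, one_mul] at this
    exact sub_eq_zero.1 (pow_eq_zero_iff (n := 2) (by norm_num) |>.1 this)
  have hwalk : ∀ v w : V, x v = x w := by
    intro v w
    obtain ⟨p⟩ := hconn v w
    induction p with
    | nil => rfl
    | cons h p ih => exact (hadj _ _ h).trans ih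
  have : Nonempty V := hconn.nonempty
  obtain ⟨v₀⟩ := this
  refine ⟨x v₀, funext fun v => ?_⟩
  have h1 : f v = x v * Real.sqrt (G.degree v) := by
    rw [hx]; rw [div_mul_cancel₀ _ (hs v).ne']
  rw [h1, hwalk v v₀]

lemma quadForm_nonneg (hdeg : ∀ v, 0 < G.degree v) (f : V → ℝ) :
    0 ≤ ∑ v, f v * (normLap G).mulVec f v := by
  rw [quadForm G hdeg f]
  apply mul_nonneg (by norm_num)
  refine Finset.sum_nonneg fun v _ => Finset.sum_nonneg fun w _ => ?_
  apply mul_nonneg _ (sq_nonneg _)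
  simp only [SimpleGraph.adjMatrix_apply]
  positivity

open scoped RealInnerProductSpace


/-- Cheeger-type upper bound: for a connected finite graph, the second smallest
eigenvalue of the normalized Laplacian (the smallest eigenvalue on the orthogonal
complement of the bottom eigenvector `v ↦ √d_v`) satisfies
`λ₂(X) ≤ |∂A| (1/vol(A) + 1/vol(B))` for any nonempty proper vertex subset `A`
with complement `B`. -/
theorem normLap_cheeger_upper {V : Type} [Fintype V] [DecidableEq V]
    (G : SimpleGraph V) [DecidableRel G.Adj]
    (hconn : G.Connected) (hdeg : ∀ v, 0 < G.degree v)
    (A : Finset V) (hA : A.Nonempty) (hA' : A ≠ Finset.univ) :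
    sInf {μ : ℝ | ∃ f : V → ℝ, f ≠ 0 ∧ (normLap G).mulVec f = μ • f ∧
        ∑ v, f v * Real.sqrt (G.degree v) = 0} ≤
      (boundaryCard G A : ℝ) * (1 / vol G A + 1 / vol G Aᶜ) := by
  classical
  have hs : ∀ v, (0:ℝ) < Real.sqrt (G.degree v) := fun v =>
    Real.sqrt_pos.2 (by exact_mod_cast hdeg v)
  have hdd : ∀ v : V, Real.sqrt (G.degree v) * Real.sqrt (G.degree v) = (G.degree v : ℝ) :=
    fun v => Real.mul_self_sqrt (by positivity)
  have hvolA : 0 < vol G A :=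
    Finset.sum_pos (fun v _ => by exact_mod_cast hdeg v) hA
  have hBne : (Aᶜ : Finset V).Nonempty := by
    rw [← Finset.card_pos, Finset.card_compl]
    have : A.card < Fintype.card V :=
      lt_of_le_of_ne (Finset.card_le_univ A) (fun h => hA' ((Finset.card_eq_iff_eq_univ A).1 h))
    omega
  have hvolB : 0 < vol G Aᶜ :=
    Finset.sum_pos (fun v _ => by exact_mod_cast hdeg v) hBne
  set a : ℝ := 1 / vol G A with hadef
  set b : ℝ := 1 / vol G Aᶜ with hbdef
  have ha : 0 < a := by positivity
  have hb : 0 < b := by positivity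
  set g : V → ℝ := fun v => if v ∈ A then Real.sqrt (G.degree v) * a
      else -(Real.sqrt (G.degree v) * b) with hg
  -- basic sums for the test vector
  have hgg : ∑ v, g v * g v = a + b := by
    rw [← Finset.sum_add_sum_compl A]
    have h1 : ∑ v ∈ A, g v * g v = vol G A * (a * a) := by
      rw [vol, Finset.sum_mul]
      refine Finset.sum_congr rfl fun v hv => ?_
      simp only [hg, if_pos hv]
      rw [mul_mul_mul_comm, hdd v]
    have h2 : ∑ v ∈ Aᶜ, g v * g v = vol G Aᶜ * (b * b) := by
      rw [vol, Finset.sum_mul]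
      refine Finset.sum_congr rfl fun v hv => ?_
      simp only [hg, if_neg (Finset.mem_compl.1 hv)]
      rw [neg_mul_neg, mul_mul_mul_comm, hdd v]
    rw [h1, h2, hadef, hbdef]
    field_simp
  have horth : ∑ v, g v * Real.sqrt (G.degree v) = 0 := by
    rw [← Finset.sum_add_sum_compl A]
    have h1 : ∑ v ∈ A, g v * Real.sqrt (G.degree v) = vol G A * a := by
      rw [vol, Finset.sum_mul]
      refine Finset.sum_congr rfl fun v hv => ?_
      simp only [hg, if_pos hv]
      rw [mul_right_comm, hdd v]
    have h2 : ∑ v ∈ Aᶜ, g v * Real.sqrt (G.degree v) = -(vol G Aᶜ * b) := by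
      have hpt : ∀ v ∈ Aᶜ, g v * Real.sqrt (G.degree v) = -((G.degree v : ℝ) * b) := by
        intro v hv
        simp only [hg, if_neg (Finset.mem_compl.1 hv)]
        rw [neg_mul, mul_right_comm, hdd v]
      rw [Finset.sum_congr rfl hpt, Finset.sum_neg_distrib, vol, Finset.sum_mul]
    rw [h1, h2, hadef, hbdef]
    field_simp
    norm_num
  -- the Rayleigh numerator
  have hxg : ∀ v, g v / Real.sqrt (G.degree v) = if v ∈ A then a else -b := by
    intro v
    by_cases hv : v ∈ A
    · simp only [hg, if_pos hv]
      rw [mul_comm, mul_div_assoc, div_self (hs v).ne', mul_one]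
    · simp only [hg, if_neg hv]
      rw [neg_div, mul_comm, mul_div_assoc, div_self (hs v).ne', mul_one]
  have hcard1 : ∑ v, ∑ w, (if v ∈ A ∧ w ∉ A ∧ G.Adj v w then (1:ℝ) else 0)
      = (boundaryCard G A : ℝ) := by
    rw [boundaryCard, ← Finset.sum_product']
    rw [show (Finset.univ ×ˢ Finset.univ : Finset (V × V)) = Finset.univ from
      Finset.univ_product_univ]
    simp [Finset.sum_boole]
  have hcard2 : ∑ v, ∑ w, (if w ∈ A ∧ v ∉ A ∧ G.Adj v w then (1:ℝ) else 0)
      = (boundaryCard G A : ℝ) := by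
    have hrw : ∀ v w : V, (if w ∈ A ∧ v ∉ A ∧ G.Adj v w then (1:ℝ) else 0)
        = (if w ∈ A ∧ v ∉ A ∧ G.Adj w v then (1:ℝ) else 0) := fun v w =>
      if_congr (and_congr_right fun _ => and_congr_right fun _ => G.adj_comm v w) rfl rfl
    rw [show (∑ v, ∑ w, (if w ∈ A ∧ v ∉ A ∧ G.Adj v w then (1:ℝ) else 0))
        = ∑ v, ∑ w, (if w ∈ A ∧ v ∉ A ∧ G.Adj w v then (1:ℝ) else 0) from
      Finset.sum_congr rfl fun v _ => Finset.sum_congr rfl fun w _ => hrw v w]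
    rw [Finset.sum_comm]
    exact hcard1
  have hboundary : ∑ v, g v * (normLap G).mulVec g v
      = (boundaryCard G A : ℝ) * (a + b)^2 := by
    rw [quadForm G hdeg g]
    have key : ∀ v w, (G.adjMatrix ℝ) v w *
        (g v / Real.sqrt (G.degree v) - g w / Real.sqrt (G.degree w))^2
        = (a+b)^2 * ((if v ∈ A ∧ w ∉ A ∧ G.Adj v w then (1:ℝ) else 0)
            + (if w ∈ A ∧ v ∉ A ∧ G.Adj v w then (1:ℝ) else 0)) := by
      intro v w
      rw [hxg v, hxg w]
      simp only [SimpleGraph.adjMatrix_apply]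
      by_cases h1 : v ∈ A <;> by_cases h2 : w ∈ A <;> by_cases h3 : G.Adj v w <;>
        simp [h1, h2, h3] <;> ring
    simp only [key, ← Finset.mul_sum]
    rw [Finset.sum_congr rfl (fun v (_ : v ∈ Finset.univ) => Finset.sum_add_distrib),
      Finset.sum_add_distrib, hcard1, hcard2]
    ring
  -- spectral decomposition
  have hH := normLap_isHermitian G
  set u : V → V → ℝ := fun i => fun v => hH.eigenvectorBasis i v with hu
  set lam : V → ℝ := hH.eigenvalues with hlam
  set c : V → ℝ := fun i => ∑ v, g v * u i v with hc
  have hueq : ∀ i, (normLap G).mulVec (u i) = lam i • u i := fun i =>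
    hH.mulVec_eigenvectorBasis i
  have hpars : ∀ y : V → ℝ,
      ∑ i, (∑ v, g v * u i v) * (∑ v, u i v * y v) = ∑ v, g v * y v := by
    intro y
    have h := hH.eigenvectorBasis.sum_inner_mul_inner
      ((WithLp.equiv 2 (V → ℝ)).symm g) ((WithLp.equiv 2 (V → ℝ)).symm y)
    have hl : ∀ i, ⟪(WithLp.equiv 2 (V → ℝ)).symm g, hH.eigenvectorBasis i⟫
        = ∑ v, g v * u i v := by
      intro i
      rw [PiLp.inner_apply]
      simp [hu, mul_comm]
    have hr : ∀ i, ⟪hH.eigenvectorBasis i, (WithLp.equiv 2 (V → ℝ)).symm y⟫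
        = ∑ v, u i v * y v := by
      intro i
      rw [PiLp.inner_apply]
      simp [hu, mul_comm]
    have hgy : ⟪(WithLp.equiv 2 (V → ℝ)).symm g, (WithLp.equiv 2 (V → ℝ)).symm y⟫
        = ∑ v, g v * y v := by
      rw [PiLp.inner_apply]
      simp [mul_comm]
    rw [← hgy, ← h]
    exact Finset.sum_congr rfl fun i _ => by rw [hl i, hr i]
  have hkey : ∀ i (y : V → ℝ), ∑ v, u i v * (normLap G).mulVec y v
      = lam i * ∑ v, u i v * y v := by
    intro i y
    rw [sum_mulVec_symm, hueq i]
    simp only [Pi.smul_apply, smul_eq_mul, mul_assoc]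
    rw [← Finset.mul_sum]
  have hucg : ∀ i, ∑ v, u i v * g v = c i := by
    intro i
    rw [hc]
    exact Finset.sum_congr rfl fun v _ => mul_comm _ _
  have hsum1 : ∑ i, c i * c i = a + b := by
    rw [← hgg, ← hpars g]
    exact Finset.sum_congr rfl fun i _ => by rw [hucg i, hc]
  have hsum2 : ∑ i, c i * (lam i * c i) = (boundaryCard G A : ℝ) * (a + b)^2 := by
    rw [← hboundary, ← hpars ((normLap G).mulVec g)]
    refine Finset.sum_congr rfl fun i _ => ?_
    rw [hkey i g, hucg i, hc]
  -- the minimizing index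
  have hIne : (Finset.univ.filter fun i => c i ≠ 0).Nonempty := by
    by_contra h
    rw [Finset.not_nonempty_iff_eq_empty, Finset.filter_eq_empty_iff] at h
    have : ∑ i, c i * c i = 0 := Finset.sum_eq_zero fun i _ => by
      have := h (Finset.mem_univ i); push_neg at this; rw [this, mul_zero]
    rw [hsum1] at this
    linarith
  obtain ⟨i₀, hi₀mem, hi₀min⟩ := Finset.exists_min_image _ lam hIne
  have hci₀ : c i₀ ≠ 0 := (Finset.mem_filter.1 hi₀mem).2
  -- lam i₀ is in the set
  have hmem : lam i₀ ∈ {μ : ℝ | ∃ f : V → ℝ, f ≠ 0 ∧ (normLap G).mulVec f = μ • f ∧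
      ∑ v, f v * Real.sqrt (G.degree v) = 0} := by
    refine ⟨u i₀, ?_, hueq i₀, ?_⟩
    · intro h0
      apply hci₀
      simp only [hc, h0, Pi.zero_apply, mul_zero, Finset.sum_const_zero]
    · by_cases hl0 : lam i₀ = 0
      · exfalso
        have hz : (normLap G).mulVec (u i₀) = 0 := by
          rw [hueq i₀, hl0, zero_smul]
        obtain ⟨c₀, hc₀⟩ := eigen_zero_eq G hconn hdeg (u i₀) hz
        apply hci₀
        simp only [hc, hc₀]
        have hpt : ∀ v : V, g v * (c₀ * Real.sqrt (G.degree v))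
            = c₀ * (g v * Real.sqrt (G.degree v)) := fun v => by ring
        simp only [hpt]
        rw [← Finset.mul_sum, horth, mul_zero]
      · have h1 : ∑ v, u i₀ v * ((normLap G).mulVec (fun v => Real.sqrt (G.degree v))) v
            = 0 := by
          rw [normLap_sqrtDeg G hdeg]
          simp
        rw [hkey i₀] at h1
        rcases mul_eq_zero.1 h1 with h | h
        · exact absurd h hl0
        · exact h
  -- the Rayleigh bound
  have hray : lam i₀ * (a + b) ≤ (boundaryCard G A : ℝ) * (a + b)^2 := by
    rw [← hsum2, ← hsum1, Finset.mul_sum]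
    refine Finset.sum_le_sum fun i _ => ?_
    by_cases hci : c i = 0
    · rw [hci]; ring_nf; exact le_refl 0
    · have h1 : lam i₀ ≤ lam i := hi₀min i (Finset.mem_filter.2 ⟨Finset.mem_univ i, hci⟩)
      have h2 : 0 < c i * c i := mul_self_pos.2 hci
      nlinarith
  -- lower bound for the set
  have hlb : ∀ μ ∈ {μ : ℝ | ∃ f : V → ℝ, f ≠ 0 ∧ (normLap G).mulVec f = μ • f ∧
      ∑ v, f v * Real.sqrt (G.degree v) = 0}, (0:ℝ) ≤ μ := by
    rintro μ ⟨f, hf0, hfe, -⟩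
    have h1 : 0 ≤ ∑ v, f v * (normLap G).mulVec f v := quadForm_nonneg G hdeg f
    have h2 : ∑ v, f v * (normLap G).mulVec f v = μ * ∑ v, f v * f v := by
      rw [hfe, Finset.mul_sum]
      exact Finset.sum_congr rfl fun v _ => by
        simp only [Pi.smul_apply, smul_eq_mul]; ring
    have h3 : 0 < ∑ v, f v * f v := by
      obtain ⟨v₀, hv₀⟩ := Function.ne_iff.1 hf0
      refine Finset.sum_pos' (fun v _ => mul_self_nonneg _) ⟨v₀, Finset.mem_univ v₀, ?_⟩
      exact mul_self_pos.2 hv₀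
    by_contra h
    push_neg at h
    nlinarith
  have hfin : sInf {μ : ℝ | ∃ f : V → ℝ, f ≠ 0 ∧ (normLap G).mulVec f = μ • f ∧
      ∑ v, f v * Real.sqrt (G.degree v) = 0} ≤ lam i₀ :=
    csInf_le ⟨0, hlb⟩ hmem
  refine hfin.trans ?_
  have hab : 0 < a + b := by linarith
  nlinarith
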